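/- arXiv:2110.09203 — 6 statements merged into one kernel-verified Lean document; each statement's English description precedes it below -/
import Mathlib

section
/- Let R be a commutative ring and A an associative R-algebra that is finitely generated projective as an R-module with positive rank. If the canonical map A ⊗_R A^op → End_R(A), sending x ⊗ y to the map z ↦ x z y, is bijective, then for every ring homomorphism R → k with k a field, the k-algebra A ⊗_R k is a central simple k-algebra. -/
open TensorProduct

/-- The canonical map `A ⊗[R] Aᵐᵒᵖ →ₗ[R] End_R(A)`, `(x ⊗ y) · z = x * z * y`. -/
noncomputable def azumayaMap (R A : Type*) [CommRing R] [Ring A] [Algebra R A] :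
    A ⊗[R] Aᵐᵒᵖ →ₗ[R] Module.End R A :=
  TensorProduct.lift <| LinearMap.mk₂ R
    (fun x y => LinearMap.mulLeft R x ∘ₗ LinearMap.mulRight R y.unop)
    (fun x x' y => by ext z; simp [add_mul])
    (fun c x y => by ext z; simp [smul_mul_assoc])
    (fun x y y' => by ext z; simp [mul_add])
    (fun c x y => by ext z; simp [mul_smul_comm, smul_mul_assoc])

/-- Azumaya algebra: finitely generated projective faithful module whose sandwich map
`A ⊗[R] Aᵐᵒᵖ → End_R(A)` is bijective. -/
def IsAzumaya' (R A : Type*) [CommRing R] [Ring A] [Algebra R A] : Prop :=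
  Module.Finite R A ∧ Module.Projective R A ∧ FaithfulSMul R A ∧
    Function.Bijective (azumayaMap R A)

/-- Central simple algebra over a field: finite-dimensional, center `k`, simple. -/
def IsCentralSimple (k A : Type*) [Field k] [Ring A] [Algebra k A] : Prop :=
  FiniteDimensional k A ∧ Subalgebra.center k A = ⊥ ∧ IsSimpleRing A

@[simp] theorem azumayaMap_tmul {R A : Type*} [CommRing R] [Ring A] [Algebra R A]
    (x : A) (y : Aᵐᵒᵖ) (z : A) :
    azumayaMap R A (x ⊗ₜ y) z = x * (z * y.unop) := by
  simp [azumayaMap]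

theorem mem_span_baseChange (R k A : Type*) [CommRing R] [CommRing k] [Algebra R k]
    [AddCommGroup A] [Module R A] [Module.Finite R A] [Module.Projective R A]
    (T : k ⊗[R] A →ₗ[k] k ⊗[R] A) :
    T ∈ Submodule.span k {S : k ⊗[R] A →ₗ[k] k ⊗[R] A | ∃ ψ : A →ₗ[R] A, S = ψ.baseChange k} := by
  classical
  obtain ⟨n, f, g, -, -, hfg⟩ := Module.Finite.exists_comp_eq_id_of_projective R A
  set b : Module.Basis (Fin n) k (k ⊗[R] (Fin n → R)) := (Pi.basisFun R (Fin n)).baseChange k with hb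
  set T' : k ⊗[R] (Fin n → R) →ₗ[k] k ⊗[R] (Fin n → R) :=
    g.baseChange k ∘ₗ T ∘ₗ f.baseChange k with hT'
  set E : Fin n → Fin n → ((Fin n → R) →ₗ[R] (Fin n → R)) :=
    fun i j => LinearMap.smulRight (LinearMap.proj j) (Pi.single i 1) with hE
  have h1 : ∀ y, f.baseChange k (g.baseChange k y) = y := by
    intro y
    have : (f ∘ₗ g).baseChange k = LinearMap.id := by rw [hfg, LinearMap.baseChange_id]
    have := LinearMap.ext_iff.mp this y
    simpa [LinearMap.baseChange_comp] using this
  have hEB : ∀ i j l, (E i j).baseChange k (b l) = if j = l then b i else 0 := by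
    intro i j l
    rw [hb, Module.Basis.baseChange_apply, LinearMap.baseChange_tmul]
    have : (E i j) (Pi.basisFun R (Fin n) l) = if j = l then Pi.basisFun R (Fin n) i else 0 := by
      simp [hE, Pi.basisFun_apply, Pi.single_apply]
    rw [this]
    split_ifs <;> simp [Module.Basis.baseChange_apply]
  have hT'eq : T' = ∑ i, ∑ j, (b.repr (T' (b j)) i) • (E i j).baseChange k := by
    refine b.ext fun l => ?_
    simp only [LinearMap.sum_apply, LinearMap.smul_apply, hEB]
    simp only [smul_ite, smul_zero, Finset.sum_ite_eq', Finset.mem_univ, if_true]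
    exact (b.sum_repr (T' (b l))).symm
  have hT : T = ∑ i, ∑ j, (b.repr (T' (b j)) i) • (f ∘ₗ E i j ∘ₗ g).baseChange k := by
    refine LinearMap.ext fun x => ?_
    have h2 := LinearMap.ext_iff.mp hT'eq (g.baseChange k x)
    have h3 : T x = f.baseChange k (T' (g.baseChange k x)) := by
      simp [hT', h1]
    rw [h3, h2]
    simp only [LinearMap.sum_apply, LinearMap.smul_apply, map_sum, map_smul,
      LinearMap.baseChange_comp, LinearMap.comp_apply]
  rw [hT]
  exact Submodule.sum_mem _ fun i _ => Submodule.sum_mem _ fun j _ =>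
    Submodule.smul_mem _ _ (Submodule.subset_span ⟨_, rfl⟩)

theorem azumayaMap_comm_of_central {k B : Type*} [CommRing k] [Ring B] [Algebra k B]
    {z : B} (hz : ∀ g : B, g * z = z * g) (t : B ⊗[k] Bᵐᵒᵖ) (w : B) :
    azumayaMap k B t (z * w) = z * azumayaMap k B t w := by
  induction t using TensorProduct.induction_on with
  | zero => simp
  | tmul x y =>
    simp only [azumayaMap_tmul]
    rw [mul_assoc z, ← mul_assoc x, hz x, mul_assoc]
  | add u v hu hv => simp [map_add, hu, hv, mul_add]

theorem azumayaMap_mem_twoSidedIdeal {k B : Type*} [CommRing k] [Ring B] [Algebra k B]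
    (I : TwoSidedIdeal B) {a : B} (ha : a ∈ I) (t : B ⊗[k] Bᵐᵒᵖ) :
    azumayaMap k B t a ∈ I := by
  induction t using TensorProduct.induction_on with
  | zero => simp [TwoSidedIdeal.zero_mem]
  | tmul x y =>
    simp only [azumayaMap_tmul]
    exact I.mul_mem_left _ _ (I.mul_mem_right _ _ ha)
  | add u v hu hv =>
    rw [map_add, LinearMap.add_apply]
    exact I.add_mem hu hv

theorem stmt0_aux {R A : Type u} [CommRing R] [Ring A] [Algebra R A]
    [Module.Finite R A] [Module.Projective R A]
    (hpos : ∀ p : PrimeSpectrum R, 0 < Module.rankAtStalk A p)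
    (hbij : Function.Bijective (azumayaMap R A)) :
    ∀ (k : Type u) [Field k] (φ : R →+* k),
      letI : Algebra R k := φ.toAlgebra
      (FiniteDimensional k (k ⊗[R] A) ∧ Subalgebra.center k (k ⊗[R] A) = ⊥ ∧
        IsSimpleRing (k ⊗[R] A)) := by
  intro k _ φ
  letI : Algebra R k := φ.toAlgebra
  -- A is faithfully flat
  haveI hff : Module.FaithfullyFlat R A := by
    rw [Module.FaithfullyFlat.iff_flat_and_proper_ideal]
    refine ⟨inferInstance, fun I hI hIT => ?_⟩
    obtain ⟨m, hm, hIm⟩ := I.exists_le_maximal hI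
    have hmT : (⊤ : Submodule R A) ≤ m • ⊤ :=
      le_trans hIT.ge (Submodule.smul_mono hIm le_rfl)
    obtain ⟨r, hr1, hr0⟩ :=
      Submodule.exists_sub_one_mem_and_smul_eq_zero_of_fg_of_le_smul m ⊤
        (Module.finite_def.mp inferInstance) hmT
    have hrm : r ∈ m.primeCompl := fun hr => hm.ne_top (m.eq_top_of_isUnit_mem
      (by simpa using m.sub_mem hr hr1) isUnit_one)
    have hsub : Subsingleton (LocalizedModule m.primeCompl A) := by
      rw [LocalizedModule.subsingleton_iff]
      exact fun x => ⟨r, hrm, hr0 x trivial⟩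
    have := hpos ⟨m, hm.isPrime⟩
    rw [Module.rankAtStalk] at this
    rw [Module.finrank_zero_of_subsingleton] at this
    exact absurd this (lt_irrefl 0)
  haveI : Nontrivial (k ⊗[R] A) := inferInstance
  -- surjectivity of the sandwich map over k
  have hsurj : Function.Surjective (azumayaMap k (k ⊗[R] A)) := by
    have hle : Submodule.span k {S : k ⊗[R] A →ₗ[k] k ⊗[R] A |
        ∃ ψ : A →ₗ[R] A, S = ψ.baseChange k}
        ≤ LinearMap.range (azumayaMap k (k ⊗[R] A)) := by
      rw [Submodule.span_le]
      rintro S ⟨ψ, rfl⟩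
      obtain ⟨t, rfl⟩ := hbij.2 ψ
      induction t using TensorProduct.induction_on with
      | zero =>
        rw [map_zero, LinearMap.baseChange_zero]
        exact Submodule.zero_mem _
      | tmul x y =>
        refine ⟨((1:k) ⊗ₜ[R] x) ⊗ₜ[k] MulOpposite.op ((1:k) ⊗ₜ[R] y.unop), ?_⟩
        refine LinearMap.ext fun w => ?_
        induction w using TensorProduct.induction_on with
        | zero => simp
        | tmul c zz =>
          simp [azumayaMap_tmul, Algebra.TensorProduct.tmul_mul_tmul,
            LinearMap.baseChange_tmul]
        | add u v hu hv => rw [map_add, map_add, hu, hv]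
      | add u v hu hv =>
        rw [map_add, LinearMap.baseChange_add]
        exact Submodule.add_mem _ hu hv
    intro T
    exact hle (mem_span_baseChange R k A T)
  refine ⟨inferInstance, ?_, ?_⟩
  · -- center
    rw [eq_bot_iff]
    intro z hz
    by_contra hzb
    have hzs : z ∉ Submodule.span k {(1 : k ⊗[R] A)} := by
      intro hmem
      obtain ⟨c, hc⟩ := Submodule.mem_span_singleton.mp hmem
      exact hzb (Algebra.mem_bot.mpr ⟨c, by rw [Algebra.algebraMap_eq_smul_one]; exact hc⟩)
    set q := (Submodule.span k {(1 : k ⊗[R] A)}).mkQ with hq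
    have hqz : q z ≠ 0 := fun h => hzs ((Submodule.Quotient.mk_eq_zero _).mp h)
    obtain ⟨ε, hε⟩ : ∃ ε : Module.Dual k _, ε (q z) ≠ 0 := by
      by_contra h
      push_neg at h
      exact hqz ((Module.forall_dual_apply_eq_zero_iff k _).mp h)
    set F : k ⊗[R] A →ₗ[k] k ⊗[R] A :=
      LinearMap.smulRight (ε ∘ₗ q) (1 : k ⊗[R] A) with hF
    obtain ⟨t, ht⟩ := hsurj F
    have hzc : ∀ g : k ⊗[R] A, g * z = z * g := fun g =>
      Subalgebra.mem_center_iff.mp hz g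
    have h1 : F 1 = 0 := by
      have : q (1 : k ⊗[R] A) = 0 := (Submodule.Quotient.mk_eq_zero _).mpr
        (Submodule.mem_span_singleton_self _)
      simp [hF, this]
    have h2 : F z = 0 := by
      calc F z = F (z * 1) := by rw [mul_one]
      _ = z * F 1 := by rw [← ht, azumayaMap_comm_of_central hzc, ht]
      _ = 0 := by rw [h1, mul_zero]
    have h3 : F z = ε (q z) • (1 : k ⊗[R] A) := by simp [hF]
    rw [h2] at h3
    have : (1 : k ⊗[R] A) = 0 := by
      have := congrArg (fun w => (ε (q z))⁻¹ • w) h3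
      simpa [smul_smul, inv_mul_cancel₀ hε] using this.symm
    exact one_ne_zero this
  · -- simple
    haveI : Nontrivial (TwoSidedIdeal (k ⊗[R] A)) := by
      refine ⟨⊥, ⊤, fun h => ?_⟩
      have : (1 : k ⊗[R] A) ∈ (⊥ : TwoSidedIdeal (k ⊗[R] A)) := h ▸ TwoSidedIdeal.mem_top _
      exact one_ne_zero ((TwoSidedIdeal.mem_bot _).mp this)
    refine ⟨⟨fun I => ?_⟩⟩
    rcases eq_or_ne I ⊥ with h | h
    · exact Or.inl h
    · refine Or.inr (SetLike.ext fun b => ⟨fun _ => TwoSidedIdeal.mem_top _, fun _ => ?_⟩)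
      obtain ⟨a, haI, ha0⟩ : ∃ a, a ∈ I ∧ a ≠ 0 := by
        by_contra h'
        push_neg at h'
        exact h (SetLike.ext fun x => ⟨fun hx => (TwoSidedIdeal.mem_bot _).mpr (h' x hx),
          fun hx => by rw [(TwoSidedIdeal.mem_bot _).mp hx]; exact TwoSidedIdeal.zero_mem I⟩)
      obtain ⟨ε, hε⟩ : ∃ ε : Module.Dual k (k ⊗[R] A), ε a ≠ 0 := by
        by_contra h'
        push_neg at h'
        exact ha0 ((Module.forall_dual_apply_eq_zero_iff k _).mp h')
      obtain ⟨t, ht⟩ := hsurj (LinearMap.smulRight ((ε a)⁻¹ • ε) b)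
      have : azumayaMap k (k ⊗[R] A) t a = b := by
        rw [ht]
        simp [inv_mul_cancel₀ hε]
      exact this ▸ azumayaMap_mem_twoSidedIdeal I haI t

theorem stmt0 {R A : Type u} [CommRing R] [Ring A] [Algebra R A]
    [Module.Finite R A] [Module.Projective R A]
    (hpos : ∀ p : PrimeSpectrum R, 0 < Module.rankAtStalk A p)
    (hbij : Function.Bijective (azumayaMap R A)) :
    ∀ (k : Type u) [Field k] (φ : R →+* k),
      letI : Algebra R k := φ.toAlgebra
      IsCentralSimple k (k ⊗[R] A) := by
  exact fun k _ φ => stmt0_aux hpos hbij k φ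
end

section
/- Let R be a commutative ring and A an associative R-algebra that is finitely generated projective as an R-module. If for every ring homomorphism R → k with k a separably closed field there exists d ≥ 1 with A ⊗_R k ≅ M_d(k) as k-algebras, then for every ring homomorphism R → k with k an arbitrary field, A ⊗_R k is a central simple k-algebra. -/
open TensorProduct

/-! ### Auxiliary lemmas -/

/-- Transfer `center = ⊥` along an algebra equivalence. -/
lemma center_eq_bot_of_algEquiv {K A B : Type*} [CommSemiring K] [Semiring A] [Semiring B]
    [Algebra K A] [Algebra K B] (e : A ≃ₐ[K] B) (h : Subalgebra.center K B = ⊥) :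
    Subalgebra.center K A = ⊥ := by
  refine le_antisymm (fun z hz => ?_) bot_le
  have : e z ∈ Subalgebra.center K B := by
    rw [Subalgebra.mem_center_iff] at hz ⊢
    intro b
    obtain ⟨a, rfl⟩ := e.surjective b
    rw [← map_mul, ← map_mul, hz]
  rw [h, Algebra.mem_bot] at this
  obtain ⟨c, hc⟩ := this
  refine Algebra.mem_bot.2 ⟨c, e.injective ?_⟩
  rw [← hc, AlgEquiv.commutes]

/-- Transfer simplicity along a ring equivalence. -/
lemma isSimpleRing_of_ringEquiv {A B : Type u} [Ring A] [Ring B] (e : A ≃+* B)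
    [IsSimpleRing B] : IsSimpleRing A := by
  haveI : Nontrivial A := e.toEquiv.nontrivial
  rw [IsSimpleRing.iff_injective_ringHom_or_subsingleton_codomain]
  intro S _ f
  rcases IsSimpleRing.injective_ringHom_or_subsingleton_codomain
    (f.comp e.symm.toRingHom) with h | h
  · left
    intro x y hxy
    have := h (a₁ := e x) (a₂ := e y) (by simpa using hxy)
    simpa using congrArg e.symm this
  · right; exact h

/-- Descent of central simplicity along a field extension `K/k`. -/
lemma descent_centralSimple {k K B : Type*} [Field k] [Field K] [Algebra k K] [Ring B]
    [Algebra k B]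
    (hc : Subalgebra.center K (K ⊗[k] B) = ⊥) (hs : IsSimpleRing (K ⊗[k] B)) :
    Subalgebra.center k B = ⊥ ∧ IsSimpleRing B := by
  -- a k-linear functional on K sending 1 to 1
  obtain ⟨f, hf⟩ := (LinearMap.toSpanSingleton k K 1).exists_leftInverse_of_injective
    (LinearMap.ker_eq_bot.2 (by
      intro x y hxy
      have : x • (1:K) = y • 1 := by
        simpa [LinearMap.toSpanSingleton_apply] using hxy
      simpa [Algebra.algebraMap_eq_smul_one] using
        (algebraMap k K).injective (by simpa [Algebra.algebraMap_eq_smul_one] using this)))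
  have hf1 : f 1 = 1 := by
    simpa [LinearMap.toSpanSingleton_apply] using congrArg (fun g => g 1) hf
  -- the retraction π : K ⊗ B → B
  set π : K ⊗[k] B →ₗ[k] B :=
    (TensorProduct.lid k B).toLinearMap ∘ₗ (f.rTensor B) with hπ
  have hπt : ∀ (c : K) (b : B), π (c ⊗ₜ b) = f c • b := fun c b => by
    simp [hπ]
  haveI : Nontrivial B := by
    refine ⟨1, 0, fun h => ?_⟩
    have : (1 : K ⊗[k] B) ≠ 0 := one_ne_zero
    apply this
    have : (1 : K ⊗[k] B) = (1 : K) ⊗ₜ (1 : B) := rfl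
    rw [this, h, TensorProduct.tmul_zero]
  constructor
  · refine le_antisymm (fun z hz => ?_) bot_le
    have hmem : (1 : K) ⊗ₜ z ∈ Subalgebra.center K (K ⊗[k] B) := by
      rw [Subalgebra.mem_center_iff] at hz ⊢
      intro w
      induction w using TensorProduct.induction_on with
      | zero => simp
      | tmul c b =>
          rw [Algebra.TensorProduct.tmul_mul_tmul, Algebra.TensorProduct.tmul_mul_tmul,
            hz, one_mul, mul_one]
      | add x y hx hy => rw [add_mul, mul_add, hx, hy]
    rw [hc, Algebra.mem_bot] at hmem
    obtain ⟨c, hcz⟩ := hmem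
    have hcz' : (c ⊗ₜ[k] (1 : B) : K ⊗[k] B) = (1 : K) ⊗ₜ[k] z := by
      rw [← hcz, Algebra.TensorProduct.algebraMap_apply, Algebra.algebraMap_self_apply]
    have := congrArg π hcz'
    rw [hπt, hπt, hf1, one_smul] at this
    exact Algebra.mem_bot.2 ⟨f c, by rw [Algebra.algebraMap_eq_smul_one, this]⟩
  · refine IsSimpleRing.of_eq_bot_or_eq_top fun I => ?_
    rcases eq_or_ne I ⊥ with h | h
    · exact Or.inl h
    right
    -- the "contracted" ideal upstairs
    set J : TwoSidedIdeal (K ⊗[k] B) := TwoSidedIdeal.mk'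
      {w | ∀ a b : K ⊗[k] B, π (a * w * b) ∈ I}
      (fun a b => by simp)
      (fun {x y} hx hy a b => by
        rw [mul_add, add_mul, map_add]; exact I.add_mem (hx a b) (hy a b))
      (fun {x} hx a b => by
        rw [mul_neg, neg_mul, map_neg]; exact I.neg_mem (hx a b))
      (fun {x y} hy a b => by rw [← mul_assoc]; exact hy (a * x) b)
      (fun {x y} hx a b => by
        rw [← mul_assoc a x y, mul_assoc (a*x) y b]; exact hx a (y * b)) with hJ
    have memJ : ∀ w, w ∈ J ↔ ∀ a b : K ⊗[k] B, π (a * w * b) ∈ I := fun w =>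
      TwoSidedIdeal.mem_mk' _ _ _ _ _ _ w
    obtain ⟨z, hzI, hz0⟩ : ∃ z ∈ I, z ≠ 0 := by
      by_contra hcon
      push_neg at hcon
      exact h (eq_bot_iff.2 fun x hx => (TwoSidedIdeal.mem_bot _).2 (hcon x hx))
    have hzJ : (1 : K) ⊗ₜ z ∈ J := by
      rw [memJ]
      intro a b
      induction a using TensorProduct.induction_on with
      | zero => simp
      | tmul c b' =>
          induction b using TensorProduct.induction_on with
          | zero => simp
          | tmul c' b'' =>
              rw [Algebra.TensorProduct.tmul_mul_tmul, Algebra.TensorProduct.tmul_mul_tmul,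
                hπt, Algebra.smul_def]
              exact I.mul_mem_left _ _ (I.mul_mem_right _ _ (I.mul_mem_left _ _ hzI))
          | add x y hx hy =>
              rw [mul_add, map_add]; exact I.add_mem hx hy
      | add x y hx hy =>
          rw [add_mul, add_mul, map_add]; exact I.add_mem hx hy
    have hJtop : J = ⊤ := by
      refine (hs.simple.eq_bot_or_eq_top J).resolve_left fun hbot => ?_
      rw [hbot, TwoSidedIdeal.mem_bot] at hzJ
      have := congrArg π hzJ
      rw [hπt, hf1, one_smul, map_zero] at this
      exact hz0 this
    have h1J : (1 : K ⊗[k] B) ∈ J := hJtop ▸ TwoSidedIdeal.mem_top _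
    have h1I : (1 : B) ∈ I := by
      have := (memJ 1).1 h1J 1 1
      rw [mul_one, one_mul] at this
      have heq : π (1 : K ⊗[k] B) = 1 := by
        have : (1 : K ⊗[k] B) = (1 : K) ⊗ₜ (1 : B) := rfl
        rw [this, hπt, hf1, one_smul]
      rwa [heq] at this
    exact I.eq_top h1I

set_option maxHeartbeats 1000000 in
set_option synthInstance.maxHeartbeats 100000 in
/-- The canonical algebra isomorphism `K ⊗[k] (k ⊗[R] A) ≃ₐ[K] K ⊗[R] A`. -/
noncomputable def cancelAlg (R k K A : Type*) [CommRing R] [Field k] [Field K]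
    [Algebra k K] [Algebra R k] [Algebra R K] [IsScalarTower R k K]
    [Ring A] [Algebra R A] :
    K ⊗[k] (k ⊗[R] A) ≃ₐ[K] K ⊗[R] A := by
  let L := TensorProduct.AlgebraTensorModule.cancelBaseChange R k K K A
  have hL : ∀ (c : K) (a : k) (m : A), L (c ⊗ₜ (a ⊗ₜ m)) = (a • c) ⊗ₜ m := fun c a m =>
    TensorProduct.AlgebraTensorModule.cancelBaseChange_tmul (R := R) (A := k) (B := K) c m a
  refine AlgEquiv.ofLinearEquiv L ?_ ?_
  · show L ((1 : K) ⊗ₜ ((1:k) ⊗ₜ (1:A))) = 1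
    rw [hL, one_smul]
    rfl
  · intro x y
    induction x using TensorProduct.induction_on with
    | zero => rw [zero_mul, map_zero, zero_mul]
    | add x₁ x₂ h₁ h₂ => rw [add_mul, map_add, map_add, h₁, h₂, add_mul]
    | tmul c w =>
      induction y using TensorProduct.induction_on with
      | zero => rw [mul_zero, map_zero, mul_zero]
      | add y₁ y₂ h₁ h₂ => rw [mul_add, map_add, map_add, h₁, h₂, mul_add]
      | tmul c' w' =>
        induction w using TensorProduct.induction_on with
        | zero => rw [TensorProduct.tmul_zero, zero_mul, map_zero, zero_mul]
        | add w₁ w₂ h₁ h₂ =>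
            rw [TensorProduct.tmul_add, add_mul, map_add, map_add, h₁, h₂, add_mul]
        | tmul a m =>
          induction w' using TensorProduct.induction_on with
          | zero => rw [TensorProduct.tmul_zero, mul_zero, map_zero, mul_zero]
          | add w₁ w₂ h₁ h₂ =>
              rw [TensorProduct.tmul_add, mul_add, map_add, map_add, h₁, h₂, mul_add]
          | tmul a' m' =>
              rw [Algebra.TensorProduct.tmul_mul_tmul, Algebra.TensorProduct.tmul_mul_tmul,
                hL, hL, hL, Algebra.TensorProduct.tmul_mul_tmul, Algebra.smul_def,
                Algebra.smul_def, Algebra.smul_def, map_mul]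
              ring_nf

set_option maxHeartbeats 2000000 in
set_option synthInstance.maxHeartbeats 400000 in
theorem stmt1 {R A : Type u} [CommRing R] [Ring A] [Algebra R A]
    [Module.Finite R A] [Module.Projective R A]
    (hsep : ∀ (k : Type u) [Field k] [IsSepClosed k] (φ : R →+* k),
      letI : Algebra R k := φ.toAlgebra
      ∃ d : ℕ, 1 ≤ d ∧ Nonempty ((k ⊗[R] A) ≃ₐ[k] Matrix (Fin d) (Fin d) k)) :
    ∀ (k : Type u) [Field k] (φ : R →+* k),
      letI : Algebra R k := φ.toAlgebra
      IsCentralSimple k (k ⊗[R] A) := by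
  intro k _ φ
  letI : Algebra R k := φ.toAlgebra
  let K := SeparableClosure k
  haveI : IsSepClosed K := IsSepClosure.sep_closed k
  let ψ : R →+* K := (algebraMap k K).comp φ
  letI : Algebra R K := ψ.toAlgebra
  haveI : IsScalarTower R k K := IsScalarTower.of_algebraMap_eq fun r => rfl
  obtain ⟨d, hd, ⟨e⟩⟩ := hsep K ψ
  haveI : Nonempty (Fin d) := ⟨⟨0, hd⟩⟩
  let E : K ⊗[k] (k ⊗[R] A) ≃ₐ[K] Matrix (Fin d) (Fin d) K := (cancelAlg R k K A).trans e
  haveI : IsSimpleRing (K ⊗[k] (k ⊗[R] A)) :=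
    isSimpleRing_of_ringEquiv (A := K ⊗[k] (k ⊗[R] A)) E.toRingEquiv
  have hc : Subalgebra.center K (K ⊗[k] (k ⊗[R] A)) = ⊥ :=
    center_eq_bot_of_algEquiv E
      (Algebra.IsCentral.center_eq_bot K (Matrix (Fin d) (Fin d) K))
  obtain ⟨h1, h2⟩ := descent_centralSimple hc ‹_›
  exact ⟨inferInstance, h1, h2⟩
end

section
/- Let R be a commutative ring and A, B Azumaya algebras over R. Then the tensor product A ⊗_R B is again an Azumaya algebra over R. -/
open TensorProduct

/-- Azumaya algebra: finitely generated projective faithful module whose sandwich map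
`A ⊗[R] Aᵐᵒᵖ → End_R(A)` is bijective. -/
def IsAzumayaAlg (R A : Type*) [CommRing R] [Ring A] [Algebra R A] : Prop :=
  Module.Finite R A ∧ Module.Projective R A ∧ FaithfulSMul R A ∧
    Function.Bijective (azumayaMap R A)

section Conj
variable {R : Type*} [CommRing R] {M N F G : Type*}
  [AddCommGroup M] [AddCommGroup N] [AddCommGroup F] [AddCommGroup G]
  [Module R M] [Module R N] [Module R F] [Module R G]

/-- Conjugation `End M → End F` along maps `i : M → F`, `p : F → M`. -/
noncomputable def conjEndHom (i : M →ₗ[R] F) (p : F →ₗ[R] M) :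
    Module.End R M →ₗ[R] Module.End R F where
  toFun f := i ∘ₗ f ∘ₗ p
  map_add' f g := by ext; simp
  map_smul' c f := by ext; simp

@[simp] theorem conjEndHom_apply (i : M →ₗ[R] F) (p : F →ₗ[R] M) (f : Module.End R M) :
    conjEndHom i p f = i ∘ₗ f ∘ₗ p := rfl

theorem conjEndHom_conjEndHom (i : M →ₗ[R] F) (p : F →ₗ[R] M)
    (hpi : p ∘ₗ i = LinearMap.id) (f : Module.End R M) :
    conjEndHom p i (conjEndHom i p f) = f := by
  have h : ∀ y, p (i y) = y := fun y => LinearMap.ext_iff.mp hpi y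
  ext x
  simp [h]

theorem homTensorHomMap_conj (i : M →ₗ[R] F) (p : F →ₗ[R] M)
    (j : N →ₗ[R] G) (q : G →ₗ[R] N) :
    (TensorProduct.homTensorHomMap (RingHom.id R) F G F G) ∘ₗ
        TensorProduct.map (conjEndHom i p) (conjEndHom j q)
      = conjEndHom (TensorProduct.map i j) (TensorProduct.map p q) ∘ₗ
        TensorProduct.homTensorHomMap (RingHom.id R) M N M N := by
  apply TensorProduct.ext'
  intro f g
  simp [← TensorProduct.map_comp]

theorem homTensorHomMap_bijective (R M N : Type*) [CommRing R]
    [AddCommGroup M] [AddCommGroup N] [Module R M] [Module R N]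
    [Module.Finite R M] [Module.Projective R M]
    [Module.Finite R N] [Module.Projective R N] :
    Function.Bijective (TensorProduct.homTensorHomMap (RingHom.id R) M N M N) := by
  obtain ⟨n, p, hp⟩ := Module.Finite.exists_fin' R M
  obtain ⟨i, hi⟩ := p.exists_rightInverse_of_surjective (LinearMap.range_eq_top.2 hp)
  obtain ⟨m, q, hq⟩ := Module.Finite.exists_fin' R N
  obtain ⟨j, hj⟩ := q.exists_rightInverse_of_surjective (LinearMap.range_eq_top.2 hq)
  set F := Fin n → R
  set G := Fin m → R
  set e := homTensorHomEquiv R F G F G with he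
  have heq : ⇑(TensorProduct.homTensorHomMap (RingHom.id R) F G F G) = ⇑e :=
    funext fun x => (homTensorHomEquiv_apply x).symm
  have hnat1 := homTensorHomMap_conj i p j q
  have hnat2 := homTensorHomMap_conj p i q j
  have hαα : ∀ x, TensorProduct.map (conjEndHom p i) (conjEndHom q j)
      (TensorProduct.map (conjEndHom i p) (conjEndHom j q) x) = x := by
    intro x
    rw [← LinearMap.comp_apply, ← TensorProduct.map_comp]
    have h1 : (conjEndHom p i) ∘ₗ (conjEndHom (R := R) i p) = LinearMap.id := by
      ext f : 1
      exact conjEndHom_conjEndHom i p hi f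
    have h2 : (conjEndHom q j) ∘ₗ (conjEndHom (R := R) j q) = LinearMap.id := by
      ext f : 1
      exact conjEndHom_conjEndHom j q hj f
    rw [h1, h2, TensorProduct.map_id, LinearMap.id_apply]
  have hmapid : TensorProduct.map p q ∘ₗ TensorProduct.map i j = LinearMap.id := by
    rw [← TensorProduct.map_comp, hi, hj, TensorProduct.map_id]
  rw [Function.bijective_iff_has_inverse]
  refine ⟨fun h => TensorProduct.map (conjEndHom p i) (conjEndHom q j)
      (e.symm (conjEndHom (TensorProduct.map i j) (TensorProduct.map p q) h)), ?_, ?_⟩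
  · intro x
    dsimp only
    have : conjEndHom (TensorProduct.map i j) (TensorProduct.map p q)
        (TensorProduct.homTensorHomMap (RingHom.id R) M N M N x)
        = e (TensorProduct.map (conjEndHom i p) (conjEndHom j q) x) := by
      rw [← heq, ← LinearMap.comp_apply, ← hnat1, LinearMap.comp_apply]
    rw [this, LinearEquiv.symm_apply_apply, hαα]
  · intro h
    dsimp only
    have h2 := LinearMap.congr_fun hnat2
      (e.symm ((conjEndHom (TensorProduct.map i j) (TensorProduct.map p q)) h))
    simp only [LinearMap.comp_apply] at h2
    rw [h2, heq, LinearEquiv.apply_symm_apply]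
    simp only [conjEndHom_apply]
    have hm : ∀ z : M ⊗[R] N, TensorProduct.map p q (TensorProduct.map i j z) = z :=
      fun z => LinearMap.ext_iff.mp hmapid z
    have hpi : ∀ y, p (i y) = y := fun y => by simpa using LinearMap.ext_iff.mp hi y
    have hqj : ∀ y, q (j y) = y := fun y => by simpa using LinearMap.ext_iff.mp hj y
    ext x
    simp [hm, hpi, hqj]

end Conj

section Main
variable (R A B : Type*) [CommRing R] [Ring A] [Algebra R A] [Ring B] [Algebra R B]

@[simp] theorem azumayaMap_tmul_s4 (x : A) (y : Aᵐᵒᵖ) :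
    azumayaMap R A (x ⊗ₜ y) = LinearMap.mulLeft R x ∘ₗ LinearMap.mulRight R y.unop := by
  simp [azumayaMap]

/-- The shuffle isomorphism `(A ⊗ B) ⊗ (A ⊗ B)ᵐᵒᵖ ≃ (A ⊗ Aᵐᵒᵖ) ⊗ (B ⊗ Bᵐᵒᵖ)`. -/
noncomputable def azuShuffle :
    (A ⊗[R] B) ⊗[R] (A ⊗[R] B)ᵐᵒᵖ ≃ₗ[R] (A ⊗[R] Aᵐᵒᵖ) ⊗[R] (B ⊗[R] Bᵐᵒᵖ) :=
  (TensorProduct.congr (LinearEquiv.refl R (A ⊗[R] B))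
    (Algebra.TensorProduct.opAlgEquiv R R A B).symm.toLinearEquiv).trans
    (TensorProduct.tensorTensorTensorComm R A B Aᵐᵒᵖ Bᵐᵒᵖ)

@[simp] theorem azuShuffle_tmul (a₁ a₂ : A) (b₁ b₂ : B) :
    azuShuffle R A B ((a₁ ⊗ₜ b₁) ⊗ₜ (MulOpposite.op (a₂ ⊗ₜ b₂))) =
      (a₁ ⊗ₜ MulOpposite.op a₂) ⊗ₜ (b₁ ⊗ₜ MulOpposite.op b₂) := by
  simp [azuShuffle, Algebra.TensorProduct.opAlgEquiv_symm_apply]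

set_option synthInstance.maxHeartbeats 1000000 in
set_option maxHeartbeats 2000000 in
theorem azumayaMap_tensor_eq :
    ⇑(azumayaMap R (A ⊗[R] B)) =
      ⇑(TensorProduct.homTensorHomMap (RingHom.id R) A B A B) ∘
        ⇑(TensorProduct.map (azumayaMap R A) (azumayaMap R B)) ∘
        ⇑(azuShuffle R A B) := by
  funext x
  induction x using TensorProduct.induction_on with
  | zero => simp
  | add u v hu hv => simp only [map_add, Function.comp_apply] at hu hv ⊢; rw [hu, hv]
  | tmul x y =>
    induction y using MulOpposite.rec' with
    | h z =>
      induction z using TensorProduct.induction_on with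
      | zero =>
        show azumayaMap R (A ⊗[R] B) (x ⊗ₜ 0) = _
        simp [MulOpposite.op_zero (α := A ⊗[R] B)]
      | add u v hu hv =>
        have : (MulOpposite.op (u + v) : (A ⊗[R] B)ᵐᵒᵖ) = MulOpposite.op u + MulOpposite.op v :=
          rfl
        rw [this, TensorProduct.tmul_add]
        simp only [map_add, Function.comp_apply] at hu hv ⊢
        rw [hu, hv]
      | tmul a₂ b₂ =>
        induction x using TensorProduct.induction_on with
        | zero => simp
        | add u v hu hv =>
          rw [TensorProduct.add_tmul]
          simp only [map_add, Function.comp_apply] at hu hv ⊢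
          rw [hu, hv]
        | tmul a₁ b₁ =>
          simp only [Function.comp_apply, azuShuffle_tmul, TensorProduct.map_tmul,
            azumayaMap_tmul_s4, MulOpposite.unop_op, TensorProduct.homTensorHomMap_apply]
          apply TensorProduct.ext'
          intro u v
          simp [LinearMap.mulLeft_apply, LinearMap.mulRight_apply,
            Algebra.TensorProduct.tmul_mul_tmul]

end Main

theorem stmt4 {R A B : Type*} [CommRing R] [Ring A] [Algebra R A] [Ring B] [Algebra R B]
    (hA : IsAzumayaAlg R A) (hB : IsAzumayaAlg R B) :
    IsAzumayaAlg R (A ⊗[R] B) := by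
  obtain ⟨hAf, hAp, hAs, hAb⟩ := hA
  obtain ⟨hBf, hBp, hBs, hBb⟩ := hB
  haveI := hAf; haveI := hAp; haveI := hAs
  haveI := hBf; haveI := hBp; haveI := hBs
  refine ⟨inferInstance, inferInstance, ?_, ?_⟩
  · -- faithfulness
    have hinjA : Function.Injective (algebraMap R A) := by
      intro r s hrs
      refine FaithfulSMul.eq_of_smul_eq_smul (α := A) fun a => ?_
      rw [Algebra.smul_def, Algebra.smul_def, hrs]
    have hinjB : Function.Injective (algebraMap R B) := by
      intro r s hrs
      refine FaithfulSMul.eq_of_smul_eq_smul (α := B) fun b => ?_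
      rw [Algebra.smul_def, Algebra.smul_def, hrs]
    set g : A →ₗ[R] A ⊗[R] B :=
      (LinearMap.lTensor A (Algebra.linearMap R B)) ∘ₗ (TensorProduct.rid R A).symm.toLinearMap
      with hgdef
    have hlin : Function.Injective ⇑(Algebra.linearMap R B) := fun x y hxy =>
      hinjB (by simpa using hxy)
    have hg : Function.Injective g := by
      rw [hgdef]
      simp only [LinearMap.coe_comp, LinearEquiv.coe_coe]
      exact Function.Injective.comp
        (Module.Flat.lTensor_preserves_injective_linearMap _ hlin)
        (TensorProduct.rid R A).symm.injective
    have hgval : ∀ a : A, g a = a ⊗ₜ 1 := by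
      intro a
      simp [hgdef]
    constructor
    intro r s h
    have h1 : algebraMap R (A ⊗[R] B) r = algebraMap R (A ⊗[R] B) s := by
      rw [Algebra.algebraMap_eq_smul_one, Algebra.algebraMap_eq_smul_one, h 1]
    have h2 : g (algebraMap R A r) = g (algebraMap R A s) := by
      rw [hgval, hgval, ← Algebra.TensorProduct.algebraMap_apply,
        ← Algebra.TensorProduct.algebraMap_apply, h1]
    exact hinjA (hg h2)
  · -- bijectivity of the sandwich map
    rw [azumayaMap_tensor_eq]
    set eA := LinearEquiv.ofBijective _ hAb
    set eB := LinearEquiv.ofBijective _ hBb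
    have hmap : ⇑(TensorProduct.map (azumayaMap R A) (azumayaMap R B)) =
        ⇑(TensorProduct.congr eA eB) := by
      have : TensorProduct.map (azumayaMap R A) (azumayaMap R B)
          = (TensorProduct.congr eA eB).toLinearMap := by
        apply TensorProduct.ext'
        intro x y
        simp [eA, eB]
      rw [this]
      rfl
    rw [hmap]
    exact ((homTensorHomMap_bijective R A B).comp
      (TensorProduct.congr eA eB).bijective).comp (azuShuffle R A B).bijective
end

section
/- Let R be a commutative ring and A an Azumaya algebra over R. Then A ⊗_R A^op is Brauer equivalent to R; more precisely, A ⊗_R A^op ≅ End_R(A) as R-algebras, with A a finitely generated projective faithful R-module. Consequently every element of the Brauer group of R is invertible with inverse given by the opposite algebra. -/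
open TensorProduct

/-- Brauer equivalence of `R`-algebras: `A ⊗ End(E) ≅ B ⊗ End(F)` for some finitely
generated projective faithful `R`-modules `E`, `F`. -/
def BrauerEquiv (R A B : Type u) [CommRing R] [Ring A] [Algebra R A] [Ring B] [Algebra R B] :
    Prop :=
  ∃ (E F : Type u) (_ : AddCommGroup E) (_ : Module R E) (_ : AddCommGroup F) (_ : Module R F),
    Module.Finite R E ∧ Module.Projective R E ∧ FaithfulSMul R E ∧
    Module.Finite R F ∧ Module.Projective R F ∧ FaithfulSMul R F ∧
    Nonempty ((A ⊗[R] Module.End R E) ≃ₐ[R] (B ⊗[R] Module.End R F))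

noncomputable def azumayaAlgHom (R A : Type*) [CommRing R] [Ring A] [Algebra R A] :
    A ⊗[R] Aᵐᵒᵖ →ₐ[R] Module.End R A :=
  Algebra.TensorProduct.algHomOfLinearMapTensorProduct (azumayaMap R A)
    (fun a₁ a₂ b₁ b₂ => by
      ext z
      simp [azumayaMap, mul_assoc])
    (by ext z; simp [azumayaMap])

noncomputable def endSelfAlgEquiv (R : Type*) [CommRing R] : R ≃ₐ[R] Module.End R R :=
  AlgEquiv.ofBijective (Algebra.lmul R R)
    ⟨fun x y h => by simpa using congrArg (fun f => f 1) h,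
     fun f => ⟨f 1, by ext z; simpa [mul_comm] using (f.map_smul z 1).symm⟩⟩

theorem stmt5 {R A : Type u} [CommRing R] [Ring A] [Algebra R A] (hA : IsAzumaya' R A) :
    Nonempty ((A ⊗[R] Aᵐᵒᵖ) ≃ₐ[R] Module.End R A) ∧
    Module.Finite R A ∧ Module.Projective R A ∧ FaithfulSMul R A ∧
    BrauerEquiv R (A ⊗[R] Aᵐᵒᵖ) R := by
  obtain ⟨hfin, hproj, hfaith, hbij⟩ := hA
  have e : (A ⊗[R] Aᵐᵒᵖ) ≃ₐ[R] Module.End R A :=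
    AlgEquiv.ofBijective (azumayaAlgHom R A) hbij
  refine ⟨⟨e⟩, hfin, hproj, hfaith, ?_⟩
  refine ⟨R, A, inferInstance, inferInstance, inferInstance, inferInstance,
    inferInstance, inferInstance, ⟨fun h => by simpa using h 1⟩, hfin, hproj, hfaith, ⟨?_⟩⟩
  exact ((Algebra.TensorProduct.congr (AlgEquiv.refl : (A ⊗[R] Aᵐᵒᵖ) ≃ₐ[R] _)
      (endSelfAlgEquiv R).symm).trans
    (Algebra.TensorProduct.rid R R (A ⊗[R] Aᵐᵒᵖ))).trans
    (e.trans (Algebra.TensorProduct.lid R (Module.End R A)).symm)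
end

section
/- Let k be a field and A a central simple k-algebra of degree d. For a left ideal I ⊆ A that is a direct summand of A as a left A-module with dim_k I = d (i.e., a point of the Severi–Brauer variety of A over k), the existence of such an I implies ind(A) = 1, i.e., A ≅ M_d(k). -/
open TensorProduct

theorem stmt17 {k A : Type*} [Field k] [Ring A] [Algebra k A]
    (d : ℕ) (hd : 1 ≤ d) (hdim : Module.finrank k A = d ^ 2) (hcs : IsCentralSimple k A)
    (I : Submodule A A) (hsummand : ∃ J : Submodule A A, IsCompl I J)
    (hdimI : Module.finrank k (I.restrictScalars k) = d) :
    Nonempty (A ≃ₐ[k] Matrix (Fin d) (Fin d) k) := by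
  obtain ⟨hfd, -, hs⟩ := hcs
  letI : Module A ↥(I.restrictScalars k) := I.module
  haveI : IsScalarTower k A ↥(I.restrictScalars k) :=
    ⟨fun c a x => Subtype.ext (smul_assoc c a (x : A))⟩
  haveI : SMulCommClass A k ↥(I.restrictScalars k) :=
    ⟨fun a c x => Subtype.ext (smul_comm a c (x : A))⟩
  haveI : FiniteDimensional k ↥(I.restrictScalars k) := inferInstance
  haveI : Nontrivial ↥(I.restrictScalars k) :=
    Module.nontrivial_of_finrank_pos (R := k) (by rw [hdimI]; omega)
  set M := ↥(I.restrictScalars k)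
  let φ : A →ₐ[k] Module.End k M := Algebra.lsmul k k M
  have hinj : Function.Injective φ := RingHom.injective (φ : A →+* Module.End k M)
  have hr : Module.finrank k A = Module.finrank k (Module.End k M) := by
    rw [hdim, Module.finrank_linearMap, hdimI]; ring
  have hsurj : Function.Surjective φ :=
    (LinearMap.injective_iff_surjective_of_finrank_eq_finrank (K := k) (V := A) (V₂ := Module.End k M) (f := φ.toLinearMap) hr).mp hinj
  exact ⟨(AlgEquiv.ofBijective φ ⟨hinj, hsurj⟩).trans
    (algEquivMatrix (Module.finBasisOfFinrankEq k M hdimI))⟩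
end

section
/- Let R be a commutative ring and A an Azumaya algebra over R. Then the center of A equals R (more precisely, the structure map R → Z(A) is an isomorphism). -/
open TensorProduct

/-- A finite projective faithful module is faithfully flat. -/
lemma aux_faithfullyFlat {R A : Type*} [CommRing R] [Ring A] [Algebra R A]
    [Module.Finite R A] [Module.Projective R A] [FaithfulSMul R A] :
    Module.FaithfullyFlat R A := by
  refine { toFlat := inferInstance, submodule_ne_top := ?_ }
  intro m hm hmtop
  obtain ⟨r, hr1, hr0⟩ :=
    Submodule.exists_sub_one_mem_and_smul_eq_zero_of_fg_of_le_smul m ⊤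
      (Module.Finite.fg_top (R := R) (M := A)) hmtop.ge
  have hr : r = 0 := by
    refine eq_of_smul_eq_smul (M := R) (α := A) (fun a => ?_)
    rw [hr0 a trivial, zero_smul]
  have : (-1 : R) ∈ m := by simpa [hr] using hr1
  have h1 : (1 : R) ∈ m := by simpa using m.neg_mem this
  exact hm.ne_top (Ideal.eq_top_of_isUnit_mem m h1 isUnit_one)

theorem stmt18 {R A : Type*} [CommRing R] [Ring A] [Algebra R A] (hA : IsAzumayaAlg R A) :
    Subalgebra.center R A = ⊥ := by
  obtain ⟨hfin, hproj, hfaith, hbij⟩ := hA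
  have hff : Module.FaithfullyFlat R A := aux_faithfullyFlat
  -- the linear maps f : R → A and g : A → A ⊗ Aᵐᵒᵖ, g a = a ⊗ 1 - 1 ⊗ op a
  set f : R →ₗ[R] A := Algebra.linearMap R A with hf
  set g : A →ₗ[R] A ⊗[R] Aᵐᵒᵖ :=
    ((TensorProduct.mk R A Aᵐᵒᵖ).flip 1) -
      ((TensorProduct.mk R A Aᵐᵒᵖ 1) ∘ₗ (MulOpposite.opLinearEquiv R).toLinearMap) with hg
  have hgapply : ∀ a : A, g a = a ⊗ₜ[R] (1 : Aᵐᵒᵖ) - (1 : A) ⊗ₜ[R] MulOpposite.op a := by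
    intro a; simp [hg]
  -- Exactness of f, g after tensoring with A on the left
  have hker : ∀ t : A ⊗[R] A, g.lTensor A t = 0 → t ∈ LinearMap.range (f.lTensor A) := by
    -- the retraction φ : A ⊗ (A ⊗ Aᵐᵒᵖ) → A ⊗ A, a ⊗ (b ⊗ c) ↦ (a * unop c) ⊗ b
    set m' : A ⊗[R] Aᵐᵒᵖ →ₗ[R] A :=
      (LinearMap.mul' R A) ∘ₗ
        (LinearMap.lTensor A (MulOpposite.opLinearEquiv R).symm.toLinearMap) with hm'
    set φ : A ⊗[R] (A ⊗[R] Aᵐᵒᵖ) →ₗ[R] A ⊗[R] A :=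
      (LinearMap.rTensor A m') ∘ₗ
        ((TensorProduct.assoc R A Aᵐᵒᵖ A).symm.toLinearMap) ∘ₗ
        (LinearMap.lTensor A (TensorProduct.comm R A Aᵐᵒᵖ).toLinearMap) with hφ
    have key : ∀ t : A ⊗[R] A,
        φ ((g.lTensor A) t) = t - (LinearMap.mul' R A t) ⊗ₜ[R] (1 : A) := by
      intro t
      induction t using TensorProduct.induction_on with
      | zero => simp
      | tmul a b =>
          rw [LinearMap.lTensor_tmul, hgapply, tmul_sub, map_sub]
          simp [hφ, hm']
      | add x y hx hy =>
          rw [map_add, map_add, hx, hy, map_add, add_tmul]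
          abel
    intro t ht
    have h2 : (0 : A ⊗[R] A) = t - (LinearMap.mul' R A t) ⊗ₜ[R] (1 : A) := by
      rw [← key t, ht, LinearMap.map_zero]
    have ht2 : t = (LinearMap.mul' R A t) ⊗ₜ[R] (1 : A) := sub_eq_zero.mp h2.symm
    refine ⟨(LinearMap.mul' R A t) ⊗ₜ[R] (1 : R), ?_⟩
    rw [LinearMap.lTensor_tmul]
    simpa [hf, Algebra.linearMap_apply] using ht2.symm
  have hcomp : ∀ s : A ⊗[R] R, g.lTensor A (f.lTensor A s) = 0 := by
    intro s
    rw [← LinearMap.comp_apply, ← LinearMap.lTensor_comp]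
    have : g ∘ₗ f = 0 := by
      apply LinearMap.ext
      intro r
      simp [hgapply, hf, Algebra.algebraMap_eq_smul_one, smul_tmul, tmul_smul]
    rw [this]
    simp
  have hex : Function.Exact (f.lTensor A) (g.lTensor A) := by
    intro t
    constructor
    · exact hker t
    · rintro ⟨s, rfl⟩; exact hcomp s
  have hexact : Function.Exact f g :=
    Module.FaithfullyFlat.lTensor_reflects_exact R A f g hex
  -- Now show center ≤ ⊥
  refine le_antisymm ?_ ?_
  · intro z hz
    rw [Subalgebra.mem_center_iff] at hz
    -- z ⊗ 1 = 1 ⊗ op z via injectivity of azumayaMap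
    have heq : z ⊗ₜ[R] (1 : Aᵐᵒᵖ) = (1 : A) ⊗ₜ[R] MulOpposite.op z := by
      apply hbij.injective
      apply LinearMap.ext
      intro w
      simp [azumayaMap, hz w]
    have hz0 : g z = 0 := by rw [hgapply, heq, sub_self]
    have := (hexact z).mp hz0
    obtain ⟨r, hr⟩ := this
    rw [Algebra.mem_bot]
    exact ⟨r, hr⟩
  · exact bot_le
end
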